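/- Let f be the class function on 𝔖_r defined by f(w) = r if w is an r-cycle and f(w) = 0 otherwise. Then the induced class function Ind_{𝔖_r}^{Γ_r} f is given by: (Ind_{𝔖_r}^{Γ_r} f)(w, (γ_1,…,γ_r)) = rℓ if w is an r-cycle and γ_1γ_2⋯γ_r = 1, and (Ind_{𝔖_r}^{Γ_r} f)(w, (γ_1,…,γ_r)) = 0 otherwise. (Via the characteristic maps, this is the identity Ind_𝔖^Γ(P_r) = Σ_{p ∈ ℤ/ℓ} P_{r,p} on power sums.) -/

import Mathlib

/- Statement 5: induction of the class function `w ↦ r·[w is an r-cycle]` from 𝔖_r to the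
wreath product Γ_r = 𝔖_r ⋉ μ_ℓ^r. -/

open scoped Classical

noncomputable section

/-- The permutation automorphism of `Fin r → G` given by `σ`, i.e. `f ↦ f ∘ σ⁻¹`. -/
def permAut (G : Type*) [Group G] (r : ℕ) (σ : Equiv.Perm (Fin r)) : MulAut (Fin r → G) where
  toFun f := f ∘ σ.symm
  invFun f := f ∘ σ
  left_inv f := by funext i; simp
  right_inv f := by funext i; simp
  map_mul' f g := rfl

/-- The action of `𝔖_r` on `G^r` by permutation of the coordinates, as a homomorphism
to the automorphism group. -/
def permHom (G : Type*) [Group G] (r : ℕ) : Equiv.Perm (Fin r) →* MulAut (Fin r → G) where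
  toFun := permAut G r
  map_one' := MulEquiv.ext fun _ => rfl
  map_mul' _ _ := MulEquiv.ext fun _ => rfl

def sdpEquivProd {N G : Type*} [Group N] [Group G] (φ : G →* MulAut N) :
    SemidirectProduct N G φ ≃ N × G where
  toFun x := (x.left, x.right)
  invFun p := ⟨p.1, p.2⟩
  left_inv _ := rfl
  right_inv _ := rfl

instance {N G : Type*} [Group N] [Group G] (φ : G →* MulAut N) [Fintype N] [Fintype G] :
    Fintype (SemidirectProduct N G φ) :=
  Fintype.ofEquiv (N × G) (sdpEquivProd φ).symm

instance (ℓ : ℕ) [NeZero ℓ] : Fintype (rootsOfUnity ℓ ℂ) := Fintype.ofFinite _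

/-- The wreath product `Γ_r = 𝔖_r ⋉ μ_ℓ^r`, where `μ_ℓ ⊆ ℂˣ` is the group of `ℓ`-th
roots of unity. -/
abbrev WreathGamma (ℓ r : ℕ) : Type :=
  (Fin r → rootsOfUnity ℓ ℂ) ⋊[permHom (rootsOfUnity ℓ ℂ) r] Equiv.Perm (Fin r)


namespace St5Aux

variable {G : Type*} [CommGroup G] [Fintype G] {r : ℕ}

/-- the coboundary homomorphism associated to a permutation. -/
def cobHom (w : Equiv.Perm (Fin r)) : (Fin r → G) →* (Fin r → G) where
  toFun ε := fun j => (ε j)⁻¹ * ε (w⁻¹ j)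
  map_one' := by funext j; simp
  map_mul' ε η := by
    funext j
    simp only [Pi.mul_apply, mul_inv]
    exact mul_mul_mul_comm _ _ _ _

lemma cobHom_apply (w : Equiv.Perm (Fin r)) (ε : Fin r → G) (j : Fin r) :
    cobHom w ε j = (ε j)⁻¹ * ε (w⁻¹ j) := rfl

/-- the product of the values of a coboundary is 1. -/
lemma prod_cobHom (w : Equiv.Perm (Fin r)) (ε : Fin r → G) :
    ∏ j, cobHom w ε j = 1 := by
  simp only [cobHom_apply]
  rw [Finset.prod_mul_distrib, Finset.prod_inv_distrib]
  rw [Equiv.prod_comp (w⁻¹ : Equiv.Perm (Fin r)) ε]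
  simp

lemma ker_const {w : Equiv.Perm (Fin r)} (hw : w.IsCycleOn (Set.univ : Set (Fin r)))
    {ε : Fin r → G} (hε : cobHom w ε = 1) (j k : Fin r) : ε j = ε k := by
  have hinv : ∀ j, ε (w⁻¹ j) = ε j := by
    intro j
    have h := congrFun hε j
    simp only [cobHom_apply, Pi.one_apply] at h
    exact (inv_mul_eq_one.mp h).symm
  have hfwd : ∀ j, ε (w j) = ε j := by
    intro j
    have h := hinv (w j)
    rw [show w⁻¹ (w j) = j from w.symm_apply_apply j] at h
    exact h.symm
  have hn : ∀ (n : ℕ) (j : Fin r), ε ((w ^ n) j) = ε j := by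
    intro n
    induction n with
    | zero => intro j; simp
    | succ n ih =>
        intro j
        rw [pow_succ', Equiv.Perm.mul_apply, hfwd]
        exact ih j
  have hn' : ∀ (n : ℕ) (j : Fin r), ε ((w⁻¹ ^ n) j) = ε j := by
    intro n
    induction n with
    | zero => intro j; simp
    | succ n ih =>
        intro j
        rw [pow_succ', Equiv.Perm.mul_apply, hinv]
        exact ih j
  have hz : ∀ (n : ℤ) (j : Fin r), ε ((w ^ n) j) = ε j := by
    intro n j
    cases n with
    | ofNat m => rw [Int.ofNat_eq_coe, zpow_natCast]; exact hn m j
    | negSucc m =>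
        rw [zpow_negSucc, ← inv_pow]
        exact hn' (m + 1) j
  obtain ⟨n, hnk⟩ := hw.2 (Set.mem_univ j) (Set.mem_univ k)
  rw [← hnk, hz]

def kerEquiv (hr : 1 ≤ r) {w : Equiv.Perm (Fin r)}
    (hw : w.IsCycleOn (Set.univ : Set (Fin r))) : (cobHom (G := G) w).ker ≃ G where
  toFun ε := ε.1 ⟨0, hr⟩
  invFun c := ⟨fun _ => c, by
    rw [MonoidHom.mem_ker]; funext j; simp [cobHom_apply]⟩
  left_inv ε := by
    ext j
    exact ker_const hw (MonoidHom.mem_ker.1 ε.2) ⟨0, hr⟩ j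
  right_inv c := rfl

/-- the product homomorphism. -/
def prodHom : (Fin r → G) →* G where
  toFun γ := ∏ j, γ j
  map_one' := by simp
  map_mul' γ η := by simp [Finset.prod_mul_distrib]

lemma range_cobHom_eq (hr : 1 ≤ r) {w : Equiv.Perm (Fin r)}
    (hw : w.IsCycleOn (Set.univ : Set (Fin r))) :
    (cobHom (G := G) w).range = (prodHom (G := G) (r := r)).ker := by
  have hle : (cobHom (G := G) w).range ≤ prodHom.ker := by
    rintro _ ⟨ε, rfl⟩
    rw [MonoidHom.mem_ker]
    exact prod_cobHom w ε
  have hker1 : Nat.card (cobHom (G := G) w).ker = Nat.card G := by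
    rw [Nat.card_congr (kerEquiv hr hw)]
  have hPsurj : Function.Surjective (prodHom (G := G) (r := r)) := by
    intro g
    refine ⟨Pi.mulSingle ⟨0, hr⟩ g, ?_⟩
    simp [prodHom]
  have h1 : Nat.card (Fin r → G) =
      Nat.card (cobHom (G := G) w).range * Nat.card (cobHom (G := G) w).ker := by
    rw [Subgroup.card_eq_card_quotient_mul_card_subgroup (cobHom (G := G) w).ker,
      Nat.card_congr (QuotientGroup.quotientKerEquivRange (cobHom (G := G) w)).toEquiv]
  have h2 : Nat.card (Fin r → G) =
      Nat.card G * Nat.card (prodHom (G := G) (r := r)).ker := by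
    rw [Subgroup.card_eq_card_quotient_mul_card_subgroup (prodHom (G := G) (r := r)).ker,
      Nat.card_congr (QuotientGroup.quotientKerEquivRange (prodHom (G := G) (r := r))).toEquiv,
      Nat.card_congr (MulEquiv.subgroupCongr
        (MonoidHom.range_eq_top_of_surjective _ hPsurj)).toEquiv, Subgroup.card_top]
  refine Subgroup.eq_of_le_of_card_ge hle ?_
  have hG : Nat.card G ≠ 0 := Nat.card_pos.ne'
  have := h1.symm.trans h2
  rw [hker1] at this
  -- range * |G| = |G| * ker
  rw [mul_comm (Nat.card G)] at this
  exact le_of_eq (Nat.eq_of_mul_eq_mul_right Nat.card_pos this).symm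

lemma count_core_aux (hr : 1 ≤ r) {w : Equiv.Perm (Fin r)}
    (hw : w.IsCycleOn (Set.univ : Set (Fin r))) (γ : Fin r → G) :
    (Finset.univ.filter fun ε : Fin r → G => cobHom w ε = γ).card =
      if (∏ j, γ j) = 1 then Fintype.card G else 0 := by
  by_cases hγ : (∏ j, γ j) = 1
  · rw [if_pos hγ]
    have : γ ∈ (cobHom (G := G) w).range := by
      rw [range_cobHom_eq hr hw, MonoidHom.mem_ker]; exact hγ
    obtain ⟨ε0, hε0⟩ := this
    have e2 : {ε : Fin r → G // cobHom w ε = γ} ≃ (cobHom (G := G) w).ker :=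
      { toFun := fun ε => ⟨ε0⁻¹ * ε.1, by
          rw [MonoidHom.mem_ker, map_mul, map_inv, hε0, ε.2, inv_mul_cancel]⟩
        invFun := fun k => ⟨ε0 * k.1, by
          have hk := k.2
          rw [MonoidHom.mem_ker] at hk
          rw [map_mul, hε0, hk, mul_one]⟩
        left_inv := fun ε => by ext; simp
        right_inv := fun k => by ext; simp }
    rw [← Fintype.card_subtype, Fintype.card_congr e2, ← Nat.card_eq_fintype_card,
      Nat.card_congr (kerEquiv hr hw), Nat.card_eq_fintype_card]
  · rw [if_neg hγ, Finset.card_eq_zero, Finset.filter_eq_empty_iff]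
    intro ε _ h
    exact hγ (h ▸ prod_cobHom w ε)

lemma count_core (hr : 1 ≤ r) {w : Equiv.Perm (Fin r)}
    (hw : w.IsCycleOn (Set.univ : Set (Fin r))) (γ : Fin r → G)
    {dp : DecidablePred fun ε : Fin r → G => cobHom w ε = γ} :
    (@Finset.filter _ _ dp Finset.univ).card =
      if (∏ j, γ j) = 1 then Fintype.card G else 0 := by
  have h2 : dp = fun a => Fintype.decidablePiFintype ((cobHom w) a) γ :=
    funext fun _ => Subsingleton.elim _ _
  rw [h2]
  exact count_core_aux hr hw γ

lemma ite_iff {α : Sort*} {p q : Prop} {h1 : Decidable p} {h2 : Decidable q}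
    (hpq : p ↔ q) (x y : α) : @ite α p h1 x y = @ite α q h2 x y := by
  by_cases hp : p
  · rw [if_pos hp, if_pos (hpq.1 hp)]
  · rw [if_neg hp, if_neg (fun hq => hp (hpq.2 hq))]

end St5Aux


namespace St5Aux

lemma mem_inr_range_iff {N G : Type*} [Group N] [Group G] {φ : G →* MulAut N}
    (z : N ⋊[φ] G) :
    z ∈ (SemidirectProduct.inr : G →* N ⋊[φ] G).range ↔ z.left = 1 := by
  constructor
  · rintro ⟨σ, rfl⟩; rfl
  · intro h
    refine ⟨z.right, ?_⟩
    ext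
    · rw [SemidirectProduct.left_inr, h]
    · rw [SemidirectProduct.right_inr]

lemma isCycleOn_conj_iff {r : ℕ} (σ w : Equiv.Perm (Fin r)) :
    (σ * w * σ⁻¹).IsCycleOn (Set.univ : Set (Fin r)) ↔
      w.IsCycleOn (Set.univ : Set (Fin r)) := by
  constructor
  · intro h
    have h2 := h.conj (g := σ⁻¹)
    rwa [show σ⁻¹ * (σ * w * σ⁻¹) * σ⁻¹⁻¹ = w by group, Set.image_univ,
      Equiv.range_eq_univ] at h2
  · intro h
    have h2 := h.conj (g := σ)
    rwa [Set.image_univ, Equiv.range_eq_univ] at h2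

end St5Aux


set_option maxHeartbeats 1000000 in
theorem statement_5 (ℓ r : ℕ) [NeZero ℓ] (hr : 1 ≤ r)
    -- the class function `f` on `𝔖_r`: `f w = r` if `w` is an `r`-cycle, `0` otherwise
    (f : Equiv.Perm (Fin r) → ℂ)
    (hf : ∀ w : Equiv.Perm (Fin r),
      f w = if w.IsCycleOn (Set.univ : Set (Fin r)) then (r : ℂ) else 0)
    -- `H` is the copy of `𝔖_r` inside `Γ_r`
    (H : Subgroup (WreathGamma ℓ r))
    (hH : H = (SemidirectProduct.inr :
      Equiv.Perm (Fin r) →* WreathGamma ℓ r).range)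
    -- the induced class function, defined by the formula
    -- `(Ind f)(x) = |H|⁻¹ · ∑_{g : g x g⁻¹ ∈ H} f (g x g⁻¹)`
    (indf : WreathGamma ℓ r → ℂ)
    (hindf : ∀ x : WreathGamma ℓ r,
      indf x = (Nat.card H : ℂ)⁻¹ *
        ∑ g : WreathGamma ℓ r,
          if g * x * g⁻¹ ∈ H then f (SemidirectProduct.rightHom (g * x * g⁻¹)) else 0) :
    ∀ x : WreathGamma ℓ r,
      indf x =
        if x.right.IsCycleOn (Set.univ : Set (Fin r)) ∧ (∏ i, x.left i) = 1
        then (r : ℂ) * (ℓ : ℂ) else 0 := by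
  intro x
  obtain ⟨γ, w⟩ := x
  have goalEq : indf ⟨γ, w⟩ =
      (Nat.card ((SemidirectProduct.inr :
          Equiv.Perm (Fin r) →* WreathGamma ℓ r).range) : ℂ)⁻¹ *
        ∑ g : WreathGamma ℓ r,
          @ite ℂ (g * (⟨γ, w⟩ : WreathGamma ℓ r) * g⁻¹ ∈ (SemidirectProduct.inr :
              Equiv.Perm (Fin r) →* WreathGamma ℓ r).range) (Classical.propDecidable _)
            (f (SemidirectProduct.rightHom (g * ⟨γ, w⟩ * g⁻¹))) 0 := by
    rw [hindf, hH]
  rw [goalEq]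
  by_cases hcyc : w.IsCycleOn (Set.univ : Set (Fin r))
  · -- main case : `w` is an `r`-cycle
    -- rewrite each summand
    have hleft : ∀ (δ : Fin r → (rootsOfUnity ℓ ℂ)) (σ : Equiv.Perm (Fin r)),
        (((⟨δ, σ⟩ : WreathGamma ℓ r) * ⟨γ, w⟩ * ⟨δ, σ⟩⁻¹).left = 1 ↔
          St5Aux.cobHom w (δ ∘ σ) = γ) := by
      intro δ σ
      have hz : ((⟨δ, σ⟩ : WreathGamma ℓ r) * ⟨γ, w⟩ * ⟨δ, σ⟩⁻¹).left =
          fun i => δ i * γ (σ.symm i) * (δ (σ (w.symm (σ.symm i))))⁻¹ := rfl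
      rw [hz, funext_iff, funext_iff]
      constructor
      · intro h j
        have h1 := h (σ j)
        simp only [Equiv.symm_apply_apply, Pi.one_apply] at h1
        have h2 : δ (σ j) * γ j = δ (σ (w.symm j)) := mul_inv_eq_one.mp h1
        rw [St5Aux.cobHom_apply]
        simp only [Function.comp_apply]
        rw [inv_mul_eq_iff_eq_mul]
        exact h2.symm
      · intro h i
        have h1 := h (σ.symm i)
        rw [St5Aux.cobHom_apply] at h1
        simp only [Function.comp_apply] at h1
        have h2 : δ (σ (w.symm (σ.symm i))) = δ (σ (σ.symm i)) * γ (σ.symm i) :=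
          inv_mul_eq_iff_eq_mul.mp h1
        rw [Equiv.apply_symm_apply] at h2
        simp only [Pi.one_apply]
        rw [mul_inv_eq_one, h2]
    have hstep : ∀ g : WreathGamma ℓ r,
        (@ite ℂ (g * (⟨γ, w⟩ : WreathGamma ℓ r) * g⁻¹ ∈ (SemidirectProduct.inr :
            Equiv.Perm (Fin r) →* WreathGamma ℓ r).range) (Classical.propDecidable _)
          (f (SemidirectProduct.rightHom (g * ⟨γ, w⟩ * g⁻¹))) 0) =
        if St5Aux.cobHom w (g.left ∘ g.right) = γ then (r : ℂ) else 0 := by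
      intro g
      have hval : f (SemidirectProduct.rightHom (g * (⟨γ, w⟩ : WreathGamma ℓ r) * g⁻¹)) =
          (r : ℂ) := by
        have hrh : SemidirectProduct.rightHom (g * (⟨γ, w⟩ : WreathGamma ℓ r) * g⁻¹) =
            g.right * w * g.right⁻¹ := rfl
        rw [hrh, hf, if_pos ((St5Aux.isCycleOn_conj_iff g.right w).2 hcyc)]
      rw [hval]
      exact St5Aux.ite_iff ((St5Aux.mem_inr_range_iff _).trans (hleft g.left g.right)) _ _
    have hsum1 : (∑ g : WreathGamma ℓ r,
        @ite ℂ (g * (⟨γ, w⟩ : WreathGamma ℓ r) * g⁻¹ ∈ (SemidirectProduct.inr :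
            Equiv.Perm (Fin r) →* WreathGamma ℓ r).range) (Classical.propDecidable _)
          (f (SemidirectProduct.rightHom (g * ⟨γ, w⟩ * g⁻¹))) 0) =
        ∑ g : WreathGamma ℓ r,
          if St5Aux.cobHom w (g.left ∘ g.right) = γ then (r : ℂ) else 0 :=
      Finset.sum_congr rfl fun g _ => hstep g
    rw [hsum1]
    -- reindex the sum over the semidirect product as a double sum
    rw [Fintype.sum_equiv (sdpEquivProd (permHom (rootsOfUnity ℓ ℂ) r))
      (fun g => if St5Aux.cobHom w (g.left ∘ g.right) = γ then (r : ℂ) else 0)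
      (fun p => if St5Aux.cobHom w (p.1 ∘ p.2) = γ then (r : ℂ) else 0)
      (fun g => rfl)]
    rw [Fintype.sum_prod_type_right]
    have hinner : ∀ σ : Equiv.Perm (Fin r),
        (∑ δ : Fin r → (rootsOfUnity ℓ ℂ), if St5Aux.cobHom w (δ ∘ σ) = γ then (r : ℂ) else 0) =
          (if (∏ j, γ j) = 1 then (Fintype.card (rootsOfUnity ℓ ℂ) : ℂ) else 0) * r := by
      intro σ
      have hbij : Function.Bijective (fun δ : Fin r → (rootsOfUnity ℓ ℂ) => δ ∘ ⇑σ) := by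
        constructor
        · intro a b h
          funext i
          have := congrFun h (σ.symm i)
          simpa using this
        · intro ε
          exact ⟨ε ∘ ⇑σ.symm, funext fun i => by simp⟩
      rw [Fintype.sum_bijective _ hbij _
        (fun ε => if St5Aux.cobHom w ε = γ then (r : ℂ) else 0) (fun δ => rfl)]
      rw [← Finset.sum_filter, Finset.sum_const, nsmul_eq_mul,
        St5Aux.count_core hr hcyc γ]
      by_cases hγ : (∏ j, γ j) = 1
      · rw [if_pos hγ, if_pos hγ]
      · rw [if_neg hγ, if_neg hγ, Nat.cast_zero, zero_mul]
    rw [Finset.sum_congr rfl (fun σ _ => hinner σ), Finset.sum_const, nsmul_eq_mul]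
    -- cardinalities
    have hN : Nat.card ((SemidirectProduct.inr :
        Equiv.Perm (Fin r) →* WreathGamma ℓ r).range) =
        Fintype.card (Equiv.Perm (Fin r)) := by
      rw [Nat.card_congr
        (MonoidHom.ofInjective SemidirectProduct.inr_injective).toEquiv.symm,
        Nat.card_eq_fintype_card]
    rw [hN]
    have hcard : (Fintype.card (rootsOfUnity ℓ ℂ) : ℂ) = (ℓ : ℂ) := by
      rw [← Nat.card_eq_fintype_card, Complex.card_rootsOfUnity ℓ]
    have hPne : (Fintype.card (Equiv.Perm (Fin r)) : ℂ) ≠ 0 :=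
      Nat.cast_ne_zero.2 Fintype.card_ne_zero
    rw [Finset.card_univ]
    by_cases hγ : (∏ j, γ j) = 1
    · rw [if_pos hγ, if_pos ⟨hcyc, hγ⟩, hcard]
      field_simp
    · rw [if_neg hγ, if_neg (fun h => hγ h.2), zero_mul, mul_zero, mul_zero]
  · -- `w` is not an `r`-cycle : everything vanishes
    rw [if_neg (fun h => hcyc h.1)]
    rw [Finset.sum_eq_zero, mul_zero]
    intro g _
    split_ifs with h
    · rw [hf, if_neg]
      intro hc
      have hrh : SemidirectProduct.rightHom (g * (⟨γ, w⟩ : WreathGamma ℓ r) * g⁻¹) =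
          g.right * w * g.right⁻¹ := rfl
      rw [hrh] at hc
      exact hcyc ((St5Aux.isCycleOn_conj_iff g.right w).1 hc)
    · rfl
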